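/- If X is a regular space of countable spread that is not hereditarily Lindelöf, then X contains a subspace that is hereditarily separable but not hereditarily Lindelöf (an S-space). -/

import Mathlib

open Set Topology TopologicalSpace
open Cardinal Ordinal

section Aux

/-- The canonical well-order of type ω₁. -/
noncomputable abbrev Om1 : Type := (Cardinal.aleph 1).ord.ToType

lemma Om1.iio_countable (a : Om1) : (Set.Iio a).Countable := by
  rw [Cardinal.countable_iff_lt_aleph_one]
  exact Cardinal.mk_Iio_ord_toType a

lemma Om1.prev_countable {Y : Type*} (f : Om1 → Y) (α : Om1) :
    (Set.range fun β : Set.Iio α => f β.1).Countable := by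
  haveI := (Om1.iio_countable α).to_subtype
  exact Set.countable_range _

lemma Om1.not_countable : ¬ Countable Om1 := by
  intro h
  have h2 : #Om1 ≤ ℵ₀ := Cardinal.mk_le_aleph0
  rw [Cardinal.mk_ord_toType] at h2
  exact absurd (lt_of_lt_of_le Cardinal.aleph0_lt_aleph_one h2) (lt_irrefl _)

lemma Om1.exists_gt {C : Set Om1} (hC : C.Countable) : ∃ b : Om1, ∀ c ∈ C, c < b := by
  by_contra hcon
  push_neg at hcon
  apply Om1.not_countable
  rw [← Set.countable_univ_iff]
  have hcover : (Set.univ : Set Om1) ⊆ ⋃ c ∈ C, Set.Iic c := by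
    intro b _
    obtain ⟨c, hcC, hbc⟩ := hcon b
    exact Set.mem_biUnion hcC hbc
  refine Set.Countable.mono hcover (Set.Countable.biUnion hC fun c _ => ?_)
  refine Set.Countable.mono ?_ ((Om1.iio_countable c).insert c)
  intro z hz
  rcases lt_or_eq_of_le (Set.mem_Iic.mp hz) with h | h
  · exact Set.mem_insert_of_mem _ h
  · exact h ▸ Set.mem_insert _ _

/-- Transfinite recursion of length ω₁ where each value is chosen (by `g`) depending on the
set of previous values. -/
noncomputable def seqOfChoice {Y : Type*} (g : Set Y → Y) : Om1 → Y :=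
  (wellFounded_lt (α := Om1)).fix fun α ih =>
    g (Set.range fun β : Set.Iio α => ih β.1 β.2)

lemma seqOfChoice_eq {Y : Type*} (g : Set Y → Y) (α : Om1) :
    seqOfChoice g α = g (Set.range fun β : Set.Iio α => seqOfChoice g β.1) :=
  WellFounded.fix_eq _ _ _

/-- From a non-Lindelöf set, extract a "bad" assignment of open neighbourhoods:
no countably many of the neighbourhoods cover `A`. -/
lemma exists_bad_cover {X : Type*} [TopologicalSpace X] {A : Set X} (hA : ¬ IsLindelof A) :
    ∃ V : X → Set X, (∀ a ∈ A, IsOpen (V a) ∧ a ∈ V a) ∧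
      ∀ s : Set X, s.Countable → ∃ a ∈ A, ∀ b ∈ s, a ∉ V b := by
  by_contra h
  push_neg at h
  apply hA
  rw [isLindelof_iff_countable_subcover]
  intro ι U hUo hAU
  choose i hi using fun a (ha : a ∈ A) => mem_iUnion.mp (hAU ha)
  classical
  set V : X → Set X := fun a => if h : a ∈ A then U (i a h) else ∅ with hV
  obtain ⟨s, hs, hcov⟩ := h V (fun a ha => by
    simp only [V, dif_pos ha]
    exact ⟨hUo _, hi a ha⟩)
  haveI := (hs.mono (inter_subset_left (t := A))).to_subtype
  refine ⟨Set.range (fun b : ↥(s ∩ A) => i b.1 b.2.2), Set.countable_range _, fun a ha => ?_⟩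
  obtain ⟨b, hbs, hab⟩ := hcov a ha
  have hbA : b ∈ A := by
    by_contra hbA
    simp only [V, dif_neg hbA] at hab
    exact absurd hab (Set.notMem_empty a)
  simp only [V, dif_pos hbA] at hab
  exact mem_iUnion₂.mpr ⟨i b hbA, ⟨⟨b, hbs, hbA⟩, rfl⟩, hab⟩

end Aux

theorem stmt13 {X : Type*} [TopologicalSpace X] [T2Space X] [RegularSpace X]
    (hspread : ∀ D : Set X, DiscreteTopology D → D.Countable)
    (hnhL : ¬ HereditarilyLindelofSpace X) :
    ∃ S : Set X, (∀ T : Set X, T ⊆ S → SeparableSpace T) ∧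
      ∃ T : Set X, T ⊆ S ∧ ¬ LindelofSpace T := by
  classical
  -- get a non-Lindelöf subset A
  obtain ⟨A, hA⟩ : ∃ A : Set X, ¬ IsLindelof A := by
    by_contra h
    push_neg at h
    exact hnhL ⟨fun t _ => h t⟩
  obtain ⟨V, hV, hstep⟩ := exists_bad_cover hA
  have hAne : A.Nonempty := by
    rcases A.eq_empty_or_nonempty with h | h
    · exact absurd (h ▸ isLindelof_empty) hA
    · exact h
  haveI : Nonempty X := ⟨hAne.choose⟩
  -- build the right-separated ω₁-sequence
  set g : Set X → X := fun s =>
    if hs : s.Countable then (hstep s hs).choose else Classical.arbitrary X with hgdef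
  have hgspec : ∀ s : Set X, s.Countable → g s ∈ A ∧ ∀ b ∈ s, g s ∉ V b := by
    intro s hs
    simp only [hgdef, dif_pos hs]
    obtain ⟨h1, h2⟩ := (hstep s hs).choose_spec
    exact ⟨h1, h2⟩
  set x : Om1 → X := seqOfChoice g with hxdef
  have hx : ∀ α : Om1, x α = g (Set.range fun β : Set.Iio α => x β.1) :=
    fun α => seqOfChoice_eq g α
  have hxA : ∀ α, x α ∈ A := fun α => by
    rw [hx α]; exact (hgspec _ (Om1.prev_countable x α)).1
  have key : ∀ α β : Om1, α < β → x β ∉ V (x α) := by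
    intro α β hαβ
    rw [hx β]
    exact (hgspec _ (Om1.prev_countable x β)).2 _ ⟨⟨α, hαβ⟩, rfl⟩
  set S : Set X := Set.range x with hS
  refine ⟨S, ?_, S, subset_rfl, ?_⟩
  · -- every subset of S is separable
    intro T hTS
    by_contra hT
    -- from non-separability: countable subsets of T are not dense in T
    have hsep : ∀ c : Set X, c.Countable → c ⊆ T → ∃ z ∈ T, z ∉ closure c := by
      intro c hc hcT
      by_contra hcl
      push_neg at hcl
      refine hT ⟨⟨Subtype.val ⁻¹' c, hc.preimage Subtype.val_injective, fun z => ?_⟩⟩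
      rw [closure_subtype]
      have himg : Subtype.val '' (Subtype.val ⁻¹' c : Set T) = c := by
        rw [Subtype.image_preimage_coe]
        exact inter_eq_self_of_subset_right hcT
      rw [himg]
      exact hcl z.1 z.2
    -- the choice of minimal-index new points
    have h2 : ∀ (s : Set Om1), s.Countable →
        {δ : Om1 | x δ ∈ T ∧ x δ ∉ closure (x '' s ∩ T)}.Nonempty := by
      intro s hs
      obtain ⟨z, hzT, hz⟩ := hsep (x '' s ∩ T) ((hs.image x).mono inter_subset_left)
        inter_subset_right
      obtain ⟨δ, rfl⟩ := hTS hzT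
      exact ⟨δ, hzT, hz⟩
    set h : Set Om1 → Om1 := fun s =>
      if hs : s.Countable then (wellFounded_lt (α := Om1)).min _ (h2 s hs)
      else (h2 ∅ Set.countable_empty).some with hhdef
    have hmem : ∀ (s : Set Om1), s.Countable →
        x (h s) ∈ T ∧ x (h s) ∉ closure (x '' s ∩ T) := by
      intro s hs
      simp only [hhdef, dif_pos hs]
      exact (wellFounded_lt (α := Om1)).min_mem _ (h2 s hs)
    have hmin : ∀ (s : Set Om1), s.Countable → ∀ δ : Om1,
        (x δ ∈ T ∧ x δ ∉ closure (x '' s ∩ T)) → h s ≤ δ := by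
      intro s hs δ hδ
      simp only [hhdef, dif_pos hs]
      exact WellFounded.min_le _ (show δ ∈ {δ : Om1 | x δ ∈ T ∧ x δ ∉ closure (x '' s ∩ T)} from hδ)
    set γ : Om1 → Om1 := seqOfChoice h with hγdef
    set t : Om1 → X := fun α => x (γ α) with htdef
    have hγ : ∀ α : Om1, γ α = h (Set.range fun β : Set.Iio α => γ β.1) :=
      fun α => seqOfChoice_eq h α
    have himg : ∀ α : Om1, x '' (Set.range fun β : Set.Iio α => γ β.1) = t '' Set.Iio α := by
      intro α
      rw [Set.image_eq_range]
      ext z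
      constructor
      · rintro ⟨w, rfl⟩
        obtain ⟨β, hβ⟩ := w.2
        exact ⟨β.1, β.2, congrArg x hβ⟩
      · rintro ⟨β, hβ, rfl⟩
        exact ⟨⟨γ β, ⟨⟨β, hβ⟩, rfl⟩⟩, rfl⟩
    have htT : ∀ α, t α ∈ T := by
      intro α
      show x (γ α) ∈ T
      rw [hγ α]
      exact (hmem _ (Om1.prev_countable γ α)).1
    have htcl : ∀ α, t α ∉ closure (t '' Set.Iio α ∩ T) := by
      intro α
      have h5 := (hmem _ (Om1.prev_countable γ α)).2
      rw [himg α] at h5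
      show x (γ α) ∉ _
      rw [hγ α]
      exact h5
    have hinterT : ∀ α : Om1, t '' Set.Iio α ∩ T = t '' Set.Iio α := by
      intro α
      apply inter_eq_self_of_subset_left
      rintro z ⟨β, _, rfl⟩
      exact htT β
    have hmono : ∀ α β : Om1, α < β → γ α < γ β := by
      intro α β hαβ
      have hle : γ α ≤ γ β := by
        conv_lhs => rw [hγ α]
        apply hmin _ (Om1.prev_countable γ α)
        constructor
        · exact htT β
        · rw [himg α]
          intro hcl
          apply htcl β
          rw [hinterT β]
          rw [hinterT α] at hcl
          exact closure_mono (Set.image_mono (Set.Iio_subset_Iio hαβ.le)) hcl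
      rcases lt_or_eq_of_le hle with h' | h'
      · exact h'
      · exfalso
        apply htcl β
        rw [hinterT β]
        have h6 : t α ∈ t '' Set.Iio β := ⟨α, hαβ, rfl⟩
        have h7 : t α = t β := by show x (γ α) = x (γ β); rw [h']
        rw [h7] at h6
        exact subset_closure h6
    have htinj : Function.Injective t := by
      intro α β hab
      by_contra hne
      rcases lt_or_gt_of_ne hne with h' | h'
      · apply htcl β
        rw [hinterT β, ← hab]
        exact subset_closure ⟨α, h', rfl⟩
      · apply htcl α
        rw [hinterT α, hab]
        exact subset_closure ⟨β, h', rfl⟩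
    -- range t is an uncountable discrete subspace : contradiction
    set D : Set X := Set.range t with hD
    have hdisc : DiscreteTopology D := by
      rw [discreteTopology_subtype_iff]
      rintro z ⟨α, rfl⟩
      rw [← nhdsWithin_inter', ← Filter.empty_mem_iff_bot, mem_nhdsWithin]
      refine ⟨V (t α) ∩ (closure (t '' Set.Iio α ∩ T))ᶜ,
        ((hV _ (hxA (γ α))).1).inter (isClosed_closure.isOpen_compl),
        ⟨(hV _ (hxA (γ α))).2, htcl α⟩, ?_⟩
      rintro w ⟨⟨hw1, hw2⟩, hwne, ⟨β, rfl⟩⟩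
      exfalso
      have hne : β ≠ α := fun hba => hwne (by rw [hba]; exact rfl)
      rcases lt_or_gt_of_ne hne with h' | h'
      · exact hw2 (subset_closure (by rw [hinterT α]; exact ⟨β, h', rfl⟩))
      · exact key (γ α) (γ β) (hmono α β h') hw1
    have hcnt : D.Countable := hspread D hdisc
    haveI := hcnt.to_subtype
    apply Om1.not_countable
    exact Function.Injective.countable (f := fun α : Om1 => (⟨t α, ⟨α, rfl⟩⟩ : D))
      (fun α β hab => htinj (congrArg Subtype.val hab))
  · -- S is not Lindelöf
    intro hL
    have hSL : IsLindelof S := isLindelof_iff_LindelofSpace.mpr hL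
    obtain ⟨C, hCcnt, hCcov⟩ := hSL.elim_countable_subcover (fun α : Om1 => V (x α))
      (fun α => (hV _ (hxA α)).1)
      (by rintro z ⟨α, rfl⟩; exact mem_iUnion.mpr ⟨α, (hV _ (hxA α)).2⟩)
    obtain ⟨b, hb⟩ := Om1.exists_gt hCcnt
    obtain ⟨α, hαC, hbV⟩ := mem_iUnion₂.mp (hCcov ⟨b, rfl⟩)
    exact key α b (hb α hαC) hbV
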